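/- For real N > 2, the sequence p_n defined by p_0 = p_1 = p_2 = 1 and p_{n+3} = N·p_{n+2}p_{n+1} − p_n satisfies the ratio inequality ρ_{n+2} > ρ_{n+1}·ρ_n for all n ≥ 3, where ρ_n = p_{n+1}/p_n. -/
import Mathlib

theorem ratio_inequality (N : ℝ) (hN : 2 < N) (p : ℕ → ℝ)
    (h0 : p 0 = 1) (h1 : p 1 = 1) (h2 : p 2 = 1)
    (hrec : ∀ n, p (n + 3) = N * p (n + 2) * p (n + 1) - p n) :
    ∀ n, 3 ≤ n →
      p (n + 3) / p (n + 2) > (p (n + 2) / p (n + 1)) * (p (n + 1) / p n) := by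
  have hpos : ∀ n, 1 ≤ p n ∧ p n ≤ p (n + 1) ∧ p (n + 1) ≤ p (n + 2) := by
    intro n
    induction n with
    | zero =>
      have h3 := hrec 0
      norm_num at h3 ⊢
      rw [h0, h1, h2] at h3
      exact ⟨by linarith, by linarith, by rw [h2]; linarith⟩
    | succ k ih =>
      obtain ⟨hk, hk1, hk2⟩ := ih
      refine ⟨by linarith, hk2, ?_⟩
      have := hrec k
      show p (k + 2) ≤ p (k + 3)
      nlinarith [mul_nonneg (mul_nonneg (by linarith : (0:ℝ) ≤ N - 2) (by linarith : (0:ℝ) ≤ p (k + 2))) (by linarith : (0:ℝ) ≤ p (k + 1)),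
        mul_nonneg (by linarith : (0:ℝ) ≤ p (k + 2)) (by linarith : (0:ℝ) ≤ p (k + 1) - 1),
        mul_nonneg (by linarith : (0:ℝ) ≤ p (k + 1)) (by linarith : (0:ℝ) ≤ p (k + 2) - 1)]
  have hinv : ∀ n, p (n + 3) * p n = p (n + 2) ^ 2 + p (n + 1) ^ 2 + (N - 3) := by
    intro n
    induction n with
    | zero =>
      have := hrec 0
      norm_num [h0, h1, h2] at this ⊢
      nlinarith
    | succ k ih =>
      have ha := hrec (k + 1)
      have hb := hrec k
      show p (k + 4) * p (k + 1) = _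
      have e : k + 1 + 3 = k + 4 := rfl
      rw [e] at ha
      linear_combination p (k + 1) * ha - p (k + 3) * hb + ih
  intro n _
  have h0n := (hpos n).1
  have h1n := (hpos (n + 1)).1
  have h2n := (hpos (n + 2)).1
  rw [gt_iff_lt, div_mul_div_comm, div_lt_div_iff₀ (by positivity) (by positivity)]
  have := hinv n
  nlinarith [sq_nonneg (p (n + 1))]
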